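/- arXiv:1209.4665 — 2 statements merged into one kernel-verified Lean document; each statement's English description precedes it below -/
import Mathlib

section
/- Let v : {1,2}×{1,2}×{1,2} → ℝ be totally symmetric, i.e. invariant under all permutations of its three indices. Then A ≤ B, where A = ∑_{k,p,r,l,q,i} v_{kpr} v_{lqr} v_{kli} v_{pqi} and B = ∑_{k,p,r,l,a,i} v_{kpr} v_{lpr} v_{kai} v_{lai}, with all indices ranging over {1,2}. -/
/-- Calabi-type inequality `A ≤ B` for a totally symmetric `2 × 2 × 2` array `v`:
`A = ∑ v_{kpr} v_{lqr} v_{kli} v_{pqi}` and `B = ∑ v_{kpr} v_{lpr} v_{kai} v_{lai}`. -/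
theorem stmt3 (v : Fin 2 → Fin 2 → Fin 2 → ℝ)
    (hsymm : ∀ k p r, v k p r = v p k r ∧ v k p r = v k r p) :
    ∑ k, ∑ p, ∑ r, ∑ l, ∑ q, ∑ i, v k p r * v l q r * v k l i * v p q i ≤
      ∑ k, ∑ p, ∑ r, ∑ l, ∑ a, ∑ i, v k p r * v l p r * v k a i * v l a i := by
  have h010 : v 0 1 0 = v 0 0 1 := by
    rw [(hsymm 0 1 0).2, (hsymm 0 0 1).1]
  have h100 : v 1 0 0 = v 0 0 1 := by
    rw [(hsymm 1 0 0).1, (hsymm 0 1 0).2, (hsymm 0 0 1).1]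
  have h101 : v 1 0 1 = v 0 1 1 := (hsymm 1 0 1).1
  have h110 : v 1 1 0 = v 0 1 1 := by
    rw [(hsymm 1 1 0).2, (hsymm 1 0 1).1]
  simp only [Fin.sum_univ_two, h010, h100, h101, h110]
  nlinarith [sq_nonneg (v 0 0 0 * v 0 1 1 - v 0 0 1 * v 0 0 1 + v 0 0 1 * v 1 1 1 - v 0 1 1 * v 0 1 1), sq_nonneg (v 0 0 0), sq_nonneg (v 1 1 1)]
end

section
/- Let L, M, N, h : ℝ² → ℝ be C² functions, define H = (1/2)e^{−2h}(L+N) and K = −1 + (LN − M²)e^{−4h}, and suppose the Codazzi equations ∂₂L − ∂₁M = 2He^{2h}∂₂h and ∂₂M − ∂₁N = −2He^{2h}∂₁h hold everywhere on ℝ². Let q ∈ ℝ² be a point at which h(q) = 0, ∂₁h(q) = ∂₂h(q) = 0, and (∂₁₁h + ∂₂₂h)(q) = −K(q). Then at q: ∂₁₁K + ∂₂₂K ≤ 2(N·∂₁₁H − 2M·∂₁₂H + L·∂₂₂H) + 2((∂₁H)² + (∂₂H)²) − 4K·H² + 4K(K+1). -/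
/-- First partial derivative `∂₁ f` of a function `f : ℝ² → ℝ`. -/
noncomputable def pd1 (f : ℝ × ℝ → ℝ) : ℝ × ℝ → ℝ :=
  fun x => fderiv ℝ f x (1, 0)

/-- Second partial derivative `∂₂ f` of a function `f : ℝ² → ℝ`. -/
noncomputable def pd2 (f : ℝ × ℝ → ℝ) : ℝ × ℝ → ℝ :=
  fun x => fderiv ℝ f x (0, 1)

/-- Directional partial derivative. -/
noncomputable def pdv (v : ℝ × ℝ) (f : ℝ × ℝ → ℝ) : ℝ × ℝ → ℝ :=
  fun x => fderiv ℝ f x v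

lemma pd1_eq : pd1 = pdv (1, 0) := rfl
lemma pd2_eq : pd2 = pdv (0, 1) := rfl

section pdvLemmas

variable {f g : ℝ × ℝ → ℝ} {x v w : ℝ × ℝ} {c : ℝ}

lemma pdv_add (hf : DifferentiableAt ℝ f x) (hg : DifferentiableAt ℝ g x) :
    pdv v (fun y => f y + g y) x = pdv v f x + pdv v g x := by
  simp [pdv, fderiv_fun_add hf hg]

lemma pdv_sub (hf : DifferentiableAt ℝ f x) (hg : DifferentiableAt ℝ g x) :
    pdv v (fun y => f y - g y) x = pdv v f x - pdv v g x := by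
  simp [pdv, fderiv_fun_sub hf hg]

lemma pdv_neg : pdv v (fun y => -(f y)) x = -(pdv v f x) := by
  simp [pdv, fderiv_neg]

lemma pdv_mul (hf : DifferentiableAt ℝ f x) (hg : DifferentiableAt ℝ g x) :
    pdv v (fun y => f y * g y) x = pdv v f x * g x + f x * pdv v g x := by
  simp [pdv, fderiv_fun_mul hf hg]; ring

lemma pdv_exp (hf : DifferentiableAt ℝ f x) :
    pdv v (fun y => Real.exp (f y)) x = Real.exp (f x) * pdv v f x := by
  simp [pdv, fderiv_exp hf]

lemma pdv_const_mul (hf : DifferentiableAt ℝ f x) :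
    pdv v (fun y => c * f y) x = c * pdv v f x := by
  simp [pdv, fderiv_const_mul hf]

lemma pdv_const_add (hf : DifferentiableAt ℝ f x) :
    pdv v (fun y => c + f y) x = pdv v f x := by
  simp [pdv, fderiv_const_add]

lemma contDiff_pdv (hf : ContDiff ℝ 2 f) : ContDiff ℝ 1 (pdv v f) :=
  (ContinuousLinearMap.apply ℝ ℝ v).contDiff.comp
    (hf.fderiv_right (by norm_num : (1 : WithTop ℕ∞) + 1 ≤ 2))

lemma differentiable_pdv (hf : ContDiff ℝ 2 f) : Differentiable ℝ (pdv v f) :=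
  (contDiff_pdv hf).differentiable (by norm_num)

lemma pdv_comm (hf : ContDiff ℝ 2 f) (v w x : ℝ × ℝ) :
    pdv v (pdv w f) x = pdv w (pdv v f) x := by
  have hd : ∀ y, HasFDerivAt f (fderiv ℝ f y) y := fun y =>
    ((hf.differentiable (by norm_num)) y).hasFDerivAt
  have hd2 : DifferentiableAt ℝ (fderiv ℝ f) x :=
    ((hf.fderiv_right (by norm_num : (1 : WithTop ℕ∞) + 1 ≤ 2)).differentiable (by norm_num)) x
  have key : ∀ u z : ℝ × ℝ, pdv z (pdv u f) x = fderiv ℝ (fderiv ℝ f) x z u := by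
    intro u z
    have h1 : pdv u f = fun y => (ContinuousLinearMap.apply ℝ ℝ u) (fderiv ℝ f y) := rfl
    have h2 := ((ContinuousLinearMap.apply ℝ ℝ u).hasFDerivAt.comp x hd2.hasFDerivAt).fderiv
    show fderiv ℝ (pdv u f) x z = _
    rw [h1]
    rw [show (fun y => (ContinuousLinearMap.apply ℝ ℝ u) (fderiv ℝ f y))
        = (ContinuousLinearMap.apply ℝ ℝ u) ∘ (fderiv ℝ f) from rfl, h2]
    rfl
  rw [key w v, key v w, second_derivative_symmetric hd hd2.hasFDerivAt v w]

end pdvLemmas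

set_option maxHeartbeats 2000000 in
/-- The key pointwise inequality (2.43) in the proof of the mean curvature estimate:
in conformal coordinates with `H = (1/2) e^{−2h}(L+N)`, `K = −1 + (LN − M²)e^{−4h}`,
the Codazzi equations holding everywhere, and `q` a point where `h`, `∂₁h`, `∂₂h`
vanish and the Gauss equation `Δh = −K` holds, one has at `q`:
`ΔK ≤ 2(N ∂₁₁H − 2M ∂₁₂H + L ∂₂₂H) + 2((∂₁H)² + (∂₂H)²) − 4KH² + 4K(K+1)`. -/
theorem stmt13 (L M N h H K : ℝ × ℝ → ℝ)
    (hL : ContDiff ℝ 2 L) (hM : ContDiff ℝ 2 M) (hN : ContDiff ℝ 2 N)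
    (hh : ContDiff ℝ 2 h)
    (hH : ∀ x, H x = (1 / 2) * Real.exp (-2 * h x) * (L x + N x))
    (hK : ∀ x, K x = -1 + (L x * N x - (M x) ^ 2) * Real.exp (-4 * h x))
    (codazzi1 : ∀ x, pd2 L x - pd1 M x = 2 * H x * Real.exp (2 * h x) * pd2 h x)
    (codazzi2 : ∀ x, pd2 M x - pd1 N x = -(2 * H x * Real.exp (2 * h x) * pd1 h x))
    (q : ℝ × ℝ) (hq0 : h q = 0) (hq1 : pd1 h q = 0) (hq2 : pd2 h q = 0)
    (gauss : pd1 (pd1 h) q + pd2 (pd2 h) q = -K q) :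
    pd1 (pd1 K) q + pd2 (pd2 K) q ≤
      2 * (N q * pd1 (pd1 H) q - 2 * M q * pd1 (pd2 H) q + L q * pd2 (pd2 H) q) +
        2 * ((pd1 H q) ^ 2 + (pd2 H q) ^ 2) - 4 * K q * (H q) ^ 2 +
        4 * K q * (K q + 1) := by
  simp only [pd1_eq, pd2_eq] at codazzi1 codazzi2 hq1 hq2 gauss ⊢
  -- basic differentiability
  have dL : Differentiable ℝ L := hL.differentiable (by norm_num)
  have dM : Differentiable ℝ M := hM.differentiable (by norm_num)
  have dN : Differentiable ℝ N := hN.differentiable (by norm_num)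
  have dh : Differentiable ℝ h := hh.differentiable (by norm_num)
  have hHc : ContDiff ℝ 2 H := by
    rw [show H = fun x => 1 / 2 * Real.exp (-2 * h x) * (L x + N x) from funext hH]
    exact (contDiff_const.mul ((contDiff_const.mul hh).exp)).mul (hL.add hN)
  have dH : Differentiable ℝ H := hHc.differentiable (by norm_num)
  have d1L : ∀ v : ℝ × ℝ, Differentiable ℝ (pdv v L) := fun v => differentiable_pdv hL
  have d1M : ∀ v : ℝ × ℝ, Differentiable ℝ (pdv v M) := fun v => differentiable_pdv hM
  have d1N : ∀ v : ℝ × ℝ, Differentiable ℝ (pdv v N) := fun v => differentiable_pdv hN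
  have d1h : ∀ v : ℝ × ℝ, Differentiable ℝ (pdv v h) := fun v => differentiable_pdv hh
  have d1H : ∀ v : ℝ × ℝ, Differentiable ℝ (pdv v H) := fun v => differentiable_pdv hHc
  -- first derivative of the identity L + N = 2 H e^{2h}
  have dI1 : ∀ (v x : ℝ × ℝ), pdv v L x + pdv v N x
      = 2 * pdv v H x * Real.exp (2 * h x)
        + 2 * H x * (Real.exp (2 * h x) * (2 * pdv v h x)) := by
    intro v x
    have h0 : (fun y => L y + N y) = (fun y => 2 * H y * Real.exp (2 * h y)) := by
      funext y
      have hy : Real.exp (-2 * h y) * Real.exp (2 * h y) = 1 := by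
        rw [← Real.exp_add]; norm_num
      rw [hH y]; linear_combination (-(L y + N y)) * hy
    have h1 : pdv v (fun y => L y + N y) x
        = pdv v (fun y => 2 * H y * Real.exp (2 * h y)) x := by rw [h0]
    rw [pdv_add (dL x) (dN x)] at h1
    rw [pdv_mul (f := fun y => 2 * H y) (g := fun y => Real.exp (2 * h y))
      ((dH x).const_mul 2) (((dh x).const_mul 2).exp)] at h1
    rw [pdv_const_mul (dH x), pdv_exp ((dh x).const_mul 2), pdv_const_mul (dh x)] at h1
    exact h1
  -- second derivatives of that identity at q
  have dI2 : ∀ v w : ℝ × ℝ, pdv v h q = 0 → pdv w h q = 0 →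
      pdv w (pdv v L) q + pdv w (pdv v N) q
        = 2 * pdv w (pdv v H) q + 4 * H q * pdv w (pdv v h) q := by
    intro v w hv hw
    have h0 : (fun x => pdv v L x + pdv v N x)
        = (fun x => 2 * pdv v H x * Real.exp (2 * h x)
            + 2 * H x * (Real.exp (2 * h x) * (2 * pdv v h x))) := funext (dI1 v)
    have h1 : pdv w (fun x => pdv v L x + pdv v N x) q
        = pdv w (fun x => 2 * pdv v H x * Real.exp (2 * h x)
            + 2 * H x * (Real.exp (2 * h x) * (2 * pdv v h x))) q := by rw [h0]
    rw [pdv_add (d1L v q) (d1N v q)] at h1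
    rw [pdv_add (((d1H v q).const_mul 2).fun_mul (((dh q).const_mul 2).exp))
      (((dH q).const_mul 2).fun_mul ((((dh q).const_mul 2).exp).fun_mul ((d1h v q).const_mul 2)))] at h1
    rw [pdv_mul (f := fun x => 2 * pdv v H x) (g := fun x => Real.exp (2 * h x))
      ((d1H v q).const_mul 2) (((dh q).const_mul 2).exp)] at h1
    rw [pdv_mul (f := fun x => 2 * H x)
      (g := fun x => Real.exp (2 * h x) * (2 * pdv v h x))
      ((dH q).const_mul 2) ((((dh q).const_mul 2).exp).fun_mul ((d1h v q).const_mul 2))] at h1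
    rw [pdv_mul (f := fun x => Real.exp (2 * h x)) (g := fun x => 2 * pdv v h x)
      (((dh q).const_mul 2).exp) ((d1h v q).const_mul 2)] at h1
    rw [pdv_const_mul (d1H v q), pdv_const_mul (dH q), pdv_const_mul (d1h v q),
      pdv_exp ((dh q).const_mul 2), pdv_const_mul (dh q)] at h1
    rw [hq0, hv, hw] at h1
    simp only [mul_zero, zero_mul, Real.exp_zero, mul_one, one_mul, add_zero, zero_add] at h1
    linear_combination h1
  -- derivatives of Codazzi 1 at q
  have dcod1 : ∀ w : ℝ × ℝ, pdv w h q = 0 →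
      pdv w (pdv (0, 1) L) q - pdv w (pdv (1, 0) M) q
        = 2 * H q * pdv w (pdv (0, 1) h) q := by
    intro w hw
    have h0 : (fun x => pdv (0, 1) L x - pdv (1, 0) M x)
        = (fun x => 2 * H x * Real.exp (2 * h x) * pdv (0, 1) h x) := funext codazzi1
    have h1 : pdv w (fun x => pdv (0, 1) L x - pdv (1, 0) M x) q
        = pdv w (fun x => 2 * H x * Real.exp (2 * h x) * pdv (0, 1) h x) q := by rw [h0]
    rw [pdv_sub (d1L (0, 1) q) (d1M (1, 0) q)] at h1
    rw [pdv_mul (f := fun x => 2 * H x * Real.exp (2 * h x)) (g := pdv (0, 1) h)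
      (((dH q).const_mul 2).fun_mul (((dh q).const_mul 2).exp)) (d1h (0, 1) q)] at h1
    rw [hq0, hq2] at h1
    simp only [mul_zero, zero_mul, Real.exp_zero, mul_one, one_mul, add_zero, zero_add] at h1
    linear_combination h1
  -- derivatives of Codazzi 2 at q
  have dcod2 : ∀ w : ℝ × ℝ, pdv w h q = 0 →
      pdv w (pdv (0, 1) M) q - pdv w (pdv (1, 0) N) q
        = -(2 * H q * pdv w (pdv (1, 0) h) q) := by
    intro w hw
    have h0 : (fun x => pdv (0, 1) M x - pdv (1, 0) N x)
        = (fun x => -(2 * H x * Real.exp (2 * h x) * pdv (1, 0) h x)) := funext codazzi2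
    have h1 : pdv w (fun x => pdv (0, 1) M x - pdv (1, 0) N x) q
        = pdv w (fun x => -(2 * H x * Real.exp (2 * h x) * pdv (1, 0) h x)) q := by rw [h0]
    rw [pdv_sub (d1M (0, 1) q) (d1N (1, 0) q)] at h1
    rw [pdv_neg (f := fun x => 2 * H x * Real.exp (2 * h x) * pdv (1, 0) h x)] at h1
    rw [pdv_mul (f := fun x => 2 * H x * Real.exp (2 * h x)) (g := pdv (1, 0) h)
      (((dH q).const_mul 2).fun_mul (((dh q).const_mul 2).exp)) (d1h (1, 0) q)] at h1
    rw [hq0, hq1] at h1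
    simp only [mul_zero, zero_mul, Real.exp_zero, mul_one, one_mul, add_zero, zero_add] at h1
    linear_combination h1
  -- first derivative of K
  have hK' : ∀ x, K x = -1 + (L x * N x - M x * M x) * Real.exp (-4 * h x) := by
    intro x; rw [hK x]; ring
  have dK1 : ∀ (v x : ℝ × ℝ), pdv v K x
      = (pdv v L x * N x + L x * pdv v N x - (pdv v M x * M x + M x * pdv v M x))
          * Real.exp (-4 * h x)
        + (L x * N x - M x * M x) * (Real.exp (-4 * h x) * (-4 * pdv v h x)) := by
    intro v x
    rw [show K = (fun y => -1 + (L y * N y - M y * M y) * Real.exp (-4 * h y))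
      from funext hK']
    rw [pdv_const_add ((((dL x).fun_mul (dN x)).fun_sub ((dM x).fun_mul (dM x))).fun_mul
      (((dh x).const_mul (-4)).exp))]
    rw [pdv_mul (f := fun y => L y * N y - M y * M y)
      (g := fun y => Real.exp (-4 * h y))
      (((dL x).fun_mul (dN x)).fun_sub ((dM x).fun_mul (dM x))) (((dh x).const_mul (-4)).exp)]
    rw [pdv_sub ((dL x).fun_mul (dN x)) ((dM x).fun_mul (dM x)), pdv_mul (dL x) (dN x),
      pdv_mul (dM x) (dM x), pdv_exp ((dh x).const_mul (-4)), pdv_const_mul (dh x)]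
  -- pure second derivatives of K at q
  have dK2 : ∀ v : ℝ × ℝ, pdv v h q = 0 →
      pdv v (pdv v K) q
        = pdv v (pdv v L) q * N q + 2 * pdv v L q * pdv v N q + L q * pdv v (pdv v N) q
          - 2 * pdv v M q * pdv v M q - 2 * M q * pdv v (pdv v M) q
          + (L q * N q - M q * M q) * (-4 * pdv v (pdv v h) q) := by
    intro v hv
    have h0 : pdv v K = (fun x =>
        (pdv v L x * N x + L x * pdv v N x - (pdv v M x * M x + M x * pdv v M x))
          * Real.exp (-4 * h x)
        + (L x * N x - M x * M x) * (Real.exp (-4 * h x) * (-4 * pdv v h x))) :=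
      funext (dK1 v)
    have dA : DifferentiableAt ℝ (fun x =>
        pdv v L x * N x + L x * pdv v N x - (pdv v M x * M x + M x * pdv v M x)) q :=
      (((d1L v q).mul (dN q)).add ((dL q).mul (d1N v q))).sub
        (((d1M v q).mul (dM q)).add ((dM q).mul (d1M v q)))
    have dE4 : Differentiable ℝ (fun x => Real.exp (-4 * h x)) := (dh.const_mul (-4)).exp
    have dP : DifferentiableAt ℝ (fun x => L x * N x - M x * M x) q :=
      ((dL q).mul (dN q)).sub ((dM q).mul (dM q))
    have dg2 : DifferentiableAt ℝ (fun x => Real.exp (-4 * h x) * (-4 * pdv v h x)) q :=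
      (dE4 q).mul ((d1h v q).const_mul (-4))
    have h1 : pdv v (pdv v K) q = pdv v (fun x =>
        (pdv v L x * N x + L x * pdv v N x - (pdv v M x * M x + M x * pdv v M x))
          * Real.exp (-4 * h x)
        + (L x * N x - M x * M x) * (Real.exp (-4 * h x) * (-4 * pdv v h x))) q := by
      rw [← h0]
    rw [pdv_add (dA.fun_mul (dE4 q)) (dP.fun_mul dg2)] at h1
    rw [pdv_mul (f := fun x =>
        pdv v L x * N x + L x * pdv v N x - (pdv v M x * M x + M x * pdv v M x))
      (g := fun x => Real.exp (-4 * h x)) dA (dE4 q)] at h1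
    rw [pdv_mul (f := fun x => L x * N x - M x * M x)
      (g := fun x => Real.exp (-4 * h x) * (-4 * pdv v h x)) dP dg2] at h1
    rw [pdv_mul (f := fun x => Real.exp (-4 * h x)) (g := fun x => -4 * pdv v h x)
      (dE4 q) ((d1h v q).const_mul (-4))] at h1
    rw [pdv_sub (((d1L v q).fun_mul (dN q)).fun_add ((dL q).fun_mul (d1N v q)))
      (((d1M v q).fun_mul (dM q)).fun_add ((dM q).fun_mul (d1M v q)))] at h1
    rw [pdv_add ((d1L v q).fun_mul (dN q)) ((dL q).fun_mul (d1N v q))] at h1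
    rw [pdv_add ((d1M v q).fun_mul (dM q)) ((dM q).fun_mul (d1M v q))] at h1
    rw [pdv_sub ((dL q).fun_mul (dN q)) ((dM q).fun_mul (dM q))] at h1
    rw [pdv_mul (d1L v q) (dN q), pdv_mul (dL q) (d1N v q), pdv_mul (d1M v q) (dM q),
      pdv_mul (dM q) (d1M v q), pdv_mul (dL q) (dN q), pdv_mul (dM q) (dM q),
      pdv_exp ((dh q).const_mul (-4)), pdv_const_mul (dh q), pdv_const_mul (d1h v q)] at h1
    rw [hq0, hv] at h1
    simp only [mul_zero, zero_mul, neg_zero, Real.exp_zero, mul_one, one_mul,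
      add_zero, zero_add] at h1
    linear_combination h1
  -- Clairaut
  have cM := pdv_comm hM (0, 1) (1, 0) q
  have cN := pdv_comm hN (0, 1) (1, 0) q
  have chh := pdv_comm hh (0, 1) (1, 0) q
  -- values at q
  have hHq : L q + N q = 2 * H q := by
    have h' := hH q
    rw [hq0] at h'
    simp only [mul_zero, neg_zero, Real.exp_zero, mul_one, one_mul] at h'
    linarith
  have hPq : L q * N q - M q * M q = K q + 1 := by
    have h' := hK q
    rw [hq0] at h'
    simp only [mul_zero, neg_zero, Real.exp_zero, mul_one, one_mul] at h'
    linear_combination -h'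
  have hH1 : ∀ v : ℝ × ℝ, pdv v h q = 0 → pdv v L q + pdv v N q = 2 * pdv v H q := by
    intro v hv
    have h' := dI1 v q
    rw [hq0, hv] at h'
    simp only [mul_zero, zero_mul, Real.exp_zero, mul_one, one_mul, add_zero] at h'
    linarith
  -- collect equations
  have k1 := dK2 (1, 0) hq1
  have k2 := dK2 (0, 1) hq2
  have e11 := dI2 (1, 0) (1, 0) hq1 hq1
  have e22 := dI2 (0, 1) (0, 1) hq2 hq2
  have e12 := dI2 (0, 1) (1, 0) hq2 hq1
  have c1a := dcod1 (1, 0) hq1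
  have c1b := dcod1 (0, 1) hq2
  have c2a := dcod2 (1, 0) hq1
  have c2b := dcod2 (0, 1) hq2
  rw [cM] at c1b
  rw [cN, chh] at c2b
  have hH1a := hH1 (1, 0) hq1
  have hH1b := hH1 (0, 1) hq2
  have key : pdv (1, 0) (pdv (1, 0) K) q + pdv (0, 1) (pdv (0, 1) K) q
      = 2 * (N q * pdv (1, 0) (pdv (1, 0) H) q - 2 * M q * pdv (1, 0) (pdv (0, 1) H) q
          + L q * pdv (0, 1) (pdv (0, 1) H) q)
        - 4 * K q * H q ^ 2 + 4 * K q * (K q + 1)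
        + 2 * (pdv (1, 0) L q * pdv (1, 0) N q + pdv (0, 1) L q * pdv (0, 1) N q)
        - 2 * (pdv (1, 0) M q ^ 2 + pdv (0, 1) M q ^ 2) := by
    linear_combination k1 + k2 + N q * e11 + L q * e22 + (N q - L q) * c1b
      + (N q - L q) * c2a + 2 * M q * c1a + (-2) * M q * c2b + (-2) * M q * e12
      + 2 * H q * (pdv (1, 0) (pdv (1, 0) h) q + pdv (0, 1) (pdv (0, 1) h) q) * hHq
      + 4 * H q ^ 2 * gauss
      + (-4) * (pdv (1, 0) (pdv (1, 0) h) q + pdv (0, 1) (pdv (0, 1) h) q) * hPq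
      + (-4) * (K q + 1) * gauss
  have b1 : 2 * (pdv (1, 0) L q * pdv (1, 0) N q) ≤ 2 * pdv (1, 0) H q ^ 2 := by
    have h2 : 2 * pdv (1, 0) H q ^ 2 = (pdv (1, 0) L q + pdv (1, 0) N q) ^ 2 / 2 := by
      rw [hH1a]; ring
    rw [h2]; nlinarith [sq_nonneg (pdv (1, 0) L q - pdv (1, 0) N q)]
  have b2 : 2 * (pdv (0, 1) L q * pdv (0, 1) N q) ≤ 2 * pdv (0, 1) H q ^ 2 := by
    have h2 : 2 * pdv (0, 1) H q ^ 2 = (pdv (0, 1) L q + pdv (0, 1) N q) ^ 2 / 2 := by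
      rw [hH1b]; ring
    rw [h2]; nlinarith [sq_nonneg (pdv (0, 1) L q - pdv (0, 1) N q)]
  linarith [key, b1, b2, sq_nonneg (pdv (1, 0) M q), sq_nonneg (pdv (0, 1) M q)]
end
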